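/- Let d₀ ∈ (0, 1/2) be such that |sin(πξ)/(πξ) − 1| ≤ 1/2 whenever π|ξ| ≤ d₀, and let s₁ be the entire function with s₁(w²) = sin(πw)/(πw). Then there is a constant c_{d₀} > 0 such that |s₁(z)| ≥ c_{d₀} e^{π√|z| |sin(θ/2)|}/(1 + |z|) for all z = |z|e^{iθ} ∈ ℂ lying outside the union of the disks {|z − k²| < 3d₀}, k ∈ ℕ. -/

import Mathlib

open Complex Real

private lemma aux_abs_sin_lower (v : ℂ) :
    (Real.exp |v.im| - Real.exp (-|v.im|)) / 2 ≤ ‖Complex.sin v‖ := by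
  have h1 : ‖Complex.exp (-v * Complex.I)‖ = Real.exp v.im := by
    rw [Complex.norm_exp]; congr 1; simp
  have h2 : ‖Complex.exp (v * Complex.I)‖ = Real.exp (-v.im) := by
    rw [Complex.norm_exp]; congr 1; simp
  have h3 : |Real.exp v.im - Real.exp (-v.im)| ≤
      ‖Complex.exp (-v * Complex.I) - Complex.exp (v * Complex.I)‖ := by
    rw [← h1, ← h2]; exact abs_norm_sub_norm_le _ _
  have h4 : ‖Complex.sin v‖
      = ‖Complex.exp (-v * Complex.I) - Complex.exp (v * Complex.I)‖ / 2 := by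
    rw [Complex.sin]
    rw [norm_div, norm_mul, Complex.norm_I, mul_one]
    norm_num
  rw [h4]
  have h5 : Real.exp |v.im| - Real.exp (-|v.im|) ≤ |Real.exp v.im - Real.exp (-v.im)| := by
    rcases le_total 0 v.im with h | h
    · rw [_root_.abs_of_nonneg h, _root_.abs_of_nonneg (by nlinarith [Real.exp_le_exp.mpr (neg_nonpos.mpr h |>.trans h)] : (0:ℝ) ≤ Real.exp v.im - Real.exp (-v.im))]
    · rw [_root_.abs_of_nonpos h, _root_.abs_of_nonpos (by nlinarith [Real.exp_le_exp.mpr (h.trans (neg_nonneg.mpr h))] : Real.exp v.im - Real.exp (-v.im) ≤ 0)]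
      rw [neg_neg]; ring_nf; rfl
  linarith [h5.trans h3]

private lemma aux_rect (d₀ : ℝ) (hd₀ : d₀ ∈ Set.Ioo (0 : ℝ) (1/2))
    (hsmall : ∀ ξ : ℂ, Real.pi * ‖ξ‖ ≤ d₀ →
      ‖(if ξ = 0 then 1 else Complex.sin (Real.pi * ξ) / (Real.pi * ξ)) - 1‖ ≤ 1/2) :
    ∃ c₁ : ℝ, 0 < c₁ ∧ ∀ u : ℂ, |u.re| ≤ 1/2 → |u.im| ≤ 1 →
      c₁ * ‖u‖ ≤ ‖Complex.sin (Real.pi * u)‖ := by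
  obtain ⟨hd₀0, hd₀half⟩ := hd₀
  set K : Set ℂ := {u : ℂ | |u.re| ≤ 1/2 ∧ |u.im| ≤ 1 ∧ d₀ ≤ Real.pi * ‖u‖} with hK
  have hKc : IsCompact K := by
    apply Metric.isCompact_of_isClosed_isBounded
    · apply IsClosed.inter
      · exact isClosed_le (continuous_abs.comp Complex.continuous_re) continuous_const
      apply IsClosed.inter
      · exact isClosed_le (continuous_abs.comp Complex.continuous_im) continuous_const
      · exact isClosed_le continuous_const (continuous_const.mul continuous_norm)
    · apply Metric.isBounded_closedBall (x := (0:ℂ)) (r := 2) |>.subset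
      intro u hu
      simp only [Metric.mem_closedBall, dist_zero_right]
      calc ‖u‖ = ‖u‖ := rfl
        _ ≤ |u.re| + |u.im| := Complex.norm_le_abs_re_add_abs_im u
        _ ≤ 2 := by linarith [hu.1, hu.2.1]
  have hKne : K.Nonempty := by
    refine ⟨(1/2 : ℝ), ?_, ?_, ?_⟩
    · simp only [Complex.ofReal_re]
      rw [_root_.abs_of_nonneg] <;> norm_num
    · simp
    · simp only [Complex.norm_real, Real.norm_eq_abs]
      rw [_root_.abs_of_nonneg (by norm_num : (0:ℝ) ≤ 1/2)]
      nlinarith [Real.pi_gt_three]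
  have hcont : Continuous (fun u : ℂ => ‖Complex.sin ((Real.pi : ℂ) * u)‖) :=
    continuous_norm.comp (Complex.continuous_sin.comp (continuous_const.mul continuous_id))
  obtain ⟨u₀, hu₀K, hmin⟩ := hKc.exists_isMinOn hKne hcont.continuousOn
  set m₂ : ℝ := ‖Complex.sin (Real.pi * u₀)‖ with hm₂
  have hm₂pos : 0 < m₂ := by
    rw [hm₂]
    have : Complex.sin (Real.pi * u₀) ≠ 0 := by
      intro hzero
      obtain ⟨n, hn⟩ := Complex.sin_eq_zero_iff.mp hzero
      have hpi : (Real.pi : ℂ) ≠ 0 := Complex.ofReal_ne_zero.mpr Real.pi_ne_zero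
      have hu₀ : u₀ = (n : ℂ) := by
        apply mul_left_cancel₀ hpi
        rw [hn]; ring
      have hre : |(n : ℝ)| ≤ 1/2 := by
        have := hu₀K.1
        rwa [hu₀, Complex.intCast_re] at this
      have hn0 : n = 0 := by
        by_contra h
        have : (1:ℝ) ≤ |(n:ℝ)| := by
          rw [← Int.cast_abs]
          exact_mod_cast Int.one_le_abs (by omega)
        linarith
      have := hu₀K.2.2
      rw [hu₀, hn0] at this
      simp at this
      linarith
    simpa using norm_pos_iff.mpr this
  refine ⟨min (Real.pi / 2) (m₂ / 2), by positivity, ?_⟩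
  intro u hre him
  by_cases hu0 : u = 0
  · simp [hu0]
  by_cases hsm : Real.pi * ‖u‖ ≤ d₀
  · have h := hsmall u hsm
    rw [if_neg hu0] at h
    have habs : (1:ℝ)/2 ≤ ‖Complex.sin (Real.pi * u) / (Real.pi * u)‖ := by
      have h' := (abs_norm_sub_norm_le
        (Complex.sin (Real.pi * u) / (Real.pi * u)) 1).trans (by simpa using h)
      simp only [norm_one] at h'
      linarith [(abs_le.mp h').1]
    have hπu : ‖(Real.pi : ℂ) * u‖ = Real.pi * ‖u‖ := by
      rw [norm_mul, Complex.norm_real, Real.norm_eq_abs, _root_.abs_of_nonneg Real.pi_pos.le]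
    have hπu0 : (0:ℝ) < Real.pi * ‖u‖ :=
      mul_pos Real.pi_pos (norm_pos_iff.mpr hu0)
    rw [norm_div, hπu, le_div_iff₀ hπu0] at habs
    calc min (Real.pi / 2) (m₂ / 2) * ‖u‖
        ≤ Real.pi / 2 * ‖u‖ := by
          apply mul_le_mul_of_nonneg_right (min_le_left _ _) (norm_nonneg u)
      _ ≤ ‖Complex.sin (Real.pi * u)‖ := by linarith
  · push_neg at hsm
    have huK : u ∈ K := ⟨hre, him, hsm.le⟩
    have h1 := hmin huK
    have h2 : ‖u‖ ≤ 2 :=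
      (Complex.norm_le_abs_re_add_abs_im u).trans (by linarith)
    calc min (Real.pi / 2) (m₂ / 2) * ‖u‖
        ≤ m₂ / 2 * 2 := by
          apply mul_le_mul (min_le_right _ _) h2 (norm_nonneg u) (by positivity)
      _ = m₂ := by ring
      _ ≤ ‖Complex.sin (Real.pi * u)‖ := by simpa using h1

private lemma aux_sqrt (z : ℂ) (hz : z ≠ 0) : ∃ w : ℂ, w ≠ 0 ∧ w ^ 2 = z ∧
    ‖w‖ = Real.sqrt (‖z‖) ∧
    w.im = Real.sqrt (‖z‖) * Real.sin (z.arg / 2) ∧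
    w.re = Real.sqrt (‖z‖) * Real.cos (z.arg / 2) := by
  have habspos : 0 < ‖z‖ := norm_pos_iff.mpr hz
  set l : ℝ := Real.log (‖z‖) with hl
  have hexp : Real.exp (l / 2) = Real.sqrt (‖z‖) := by
    rw [hl, ← Real.log_sqrt habspos.le,
      Real.exp_log (Real.sqrt_pos.mpr habspos)]
  refine ⟨Complex.exp ((l / 2 : ℝ) + (z.arg / 2 : ℝ) * Complex.I), Complex.exp_ne_zero _, ?_, ?_, ?_, ?_⟩
  · rw [← Complex.exp_nat_mul]
    have : (2 : ℂ) * ((l / 2 : ℝ) + (z.arg / 2 : ℝ) * Complex.I) = (l : ℝ) + (z.arg : ℝ) * Complex.I := by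
      push_cast; ring
    rw [show ((2:ℕ):ℂ) = (2:ℂ) by norm_num, this, Complex.exp_add, ← Complex.ofReal_exp, hl,
      Real.exp_log habspos, Complex.norm_mul_exp_arg_mul_I]
  · rw [Complex.norm_exp]
    simp [hexp]
  · rw [Complex.exp_im]
    simp [hexp]
  · rw [Complex.exp_re]
    simp [hexp]

private lemma aux_s1_zero (d₀ : ℝ) (hd₀ : d₀ ∈ Set.Ioo (0 : ℝ) (1/2))
    (hsmall : ∀ ξ : ℂ, Real.pi * ‖ξ‖ ≤ d₀ →
      ‖(if ξ = 0 then 1 else Complex.sin (Real.pi * ξ) / (Real.pi * ξ)) - 1‖ ≤ 1/2)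
    (s₁ : ℂ → ℂ) (hs₁ : Differentiable ℂ s₁)
    (hval : ∀ w : ℂ, w ≠ 0 → s₁ (w ^ 2) = Complex.sin (Real.pi * w) / (Real.pi * w)) :
    (1:ℝ)/2 ≤ ‖s₁ 0‖ := by
  obtain ⟨hd₀0, hd₀half⟩ := hd₀
  have key : ∀ x : ℝ, 0 < x → x ≤ (d₀ / Real.pi)^2 → 1/2 ≤ ‖s₁ (x : ℂ)‖ := by
    intro x hx hxle
    set w : ℂ := ((Real.sqrt x : ℝ) : ℂ) with hw
    have hw0 : w ≠ 0 := by
      simp only [hw, ne_eq, Complex.ofReal_eq_zero]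
      exact (Real.sqrt_pos.mpr hx).ne'
    have hw2 : w ^ 2 = (x : ℂ) := by
      rw [hw, ← Complex.ofReal_pow, Real.sq_sqrt hx.le]
    have habsw : ‖w‖ = Real.sqrt x := by
      rw [hw, Complex.norm_real, Real.norm_eq_abs, _root_.abs_of_nonneg (Real.sqrt_nonneg x)]
    have hsm : Real.pi * ‖w‖ ≤ d₀ := by
      rw [habsw]
      have h1 : Real.sqrt x ≤ d₀ / Real.pi := by
        rw [show d₀ / Real.pi = Real.sqrt ((d₀ / Real.pi)^2) by
          rw [Real.sqrt_sq (by positivity)]]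
        exact Real.sqrt_le_sqrt hxle
      rw [← le_div_iff₀' Real.pi_pos]
      exact h1
    have h := hsmall w hsm
    rw [if_neg hw0] at h
    have h' := (abs_norm_sub_norm_le
      (Complex.sin (Real.pi * w) / (Real.pi * w)) 1).trans h
    simp only [norm_one] at h'
    have := (abs_le.mp h').1
    rw [← hw2, hval w hw0]
    linarith
  have hcont : Filter.Tendsto (fun x : ℝ => ‖s₁ (x : ℂ)‖)
      (nhdsWithin 0 (Set.Ioi 0)) (nhds (‖s₁ 0‖)) := by
    have : Continuous (fun x : ℝ => ‖s₁ (x : ℂ)‖) :=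
      continuous_norm.comp (hs₁.continuous.comp Complex.continuous_ofReal)
    have := this.tendsto 0
    simp only [Complex.ofReal_zero] at this
    exact this.mono_left nhdsWithin_le_nhds
  refine ge_of_tendsto hcont ?_
  filter_upwards [Ioo_mem_nhdsGT_of_mem
    (show (0:ℝ) ∈ Set.Ico (0:ℝ) ((d₀ / Real.pi)^2) from
      Set.mem_Ico.mpr ⟨le_refl (0:ℝ), by positivity⟩)] with x hx
  exact key x hx.1 hx.2.le

private lemma aux_compact_min (d₀ : ℝ) (hd₀ : d₀ ∈ Set.Ioo (0 : ℝ) (1/2))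
    (hsmall : ∀ ξ : ℂ, Real.pi * ‖ξ‖ ≤ d₀ →
      ‖(if ξ = 0 then 1 else Complex.sin (Real.pi * ξ) / (Real.pi * ξ)) - 1‖ ≤ 1/2)
    (s₁ : ℂ → ℂ) (hs₁ : Differentiable ℂ s₁)
    (hval : ∀ w : ℂ, w ≠ 0 → s₁ (w ^ 2) = Complex.sin (Real.pi * w) / (Real.pi * w)) :
    ∃ m₁ : ℝ, 0 < m₁ ∧ ∀ z : ℂ, ‖z‖ ≤ 4 →
      (∀ k : ℕ, 1 ≤ k → 3 * d₀ ≤ ‖z - (k : ℂ) ^ 2‖) →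
      m₁ ≤ ‖s₁ z‖ := by
  obtain ⟨hd₀0, hd₀half⟩ := hd₀
  set K : Set ℂ := {z : ℂ | ‖z‖ ≤ 4 ∧
    ∀ k : ℕ, 1 ≤ k → 3 * d₀ ≤ ‖z - (k : ℂ) ^ 2‖} with hKdef
  have hnonvanish : ∀ z ∈ K, s₁ z ≠ 0 := by
    rintro z ⟨hz4, hzk⟩
    by_cases hz0 : z = 0
    · subst hz0
      intro h
      have := aux_s1_zero d₀ ⟨hd₀0, hd₀half⟩ hsmall s₁ hs₁ hval
      rw [h] at this; simp at this; linarith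
    · obtain ⟨w, hw0, hw2, -, -, -⟩ := aux_sqrt z hz0
      rw [← hw2, hval w hw0]
      intro h
      have hπw : (Real.pi : ℂ) * w ≠ 0 :=
        mul_ne_zero (Complex.ofReal_ne_zero.mpr Real.pi_ne_zero) hw0
      have hsin : Complex.sin (Real.pi * w) = 0 := by
        rcases div_eq_zero_iff.mp h with h' | h'
        · exact h'
        · exact absurd h' hπw
      obtain ⟨n, hn⟩ := Complex.sin_eq_zero_iff.mp hsin
      have hwn : w = (n : ℂ) := by
        apply mul_left_cancel₀ (Complex.ofReal_ne_zero.mpr Real.pi_ne_zero)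
        rw [hn]; ring
      have hn0 : n ≠ 0 := by rintro rfl; simp at hwn; exact hw0 hwn
      have hcast : ((n.natAbs : ℕ) : ℂ) ^ 2 = (n : ℂ) ^ 2 := by
        have h2 : ((n : ℂ)) ^ 2 = (((n.natAbs : ℤ) : ℂ)) ^ 2 := by
          rcases Int.natAbs_eq n with h1 | h1 <;> nth_rewrite 1 [h1] <;> push_cast <;> ring
        rw [h2]
        norm_cast
      have := hzk n.natAbs (by omega)
      rw [hcast, ← hw2, ← hwn] at this
      simp at this
      linarith
  by_cases hKne : K.Nonempty
  · have hKc : IsCompact K := by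
      apply Metric.isCompact_of_isClosed_isBounded
      · apply IsClosed.inter
        · exact isClosed_le continuous_norm continuous_const
        · have hcl : IsClosed (⋂ k : ℕ, {z : ℂ | 1 ≤ k → 3 * d₀ ≤ ‖z - (k : ℂ) ^ 2‖}) := by
            apply isClosed_iInter
            intro k
            by_cases hk : 1 ≤ k
            · simp only [hk, forall_true_left]
              exact isClosed_le continuous_const
                (continuous_norm.comp (continuous_id.sub continuous_const))
            · convert isClosed_univ
              ext z
              simp [hk]
          refine (congrArg IsClosed ?_).mpr hcl
          ext z
          simp only [Set.mem_iInter, Set.mem_setOf_eq]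
          rfl
      · apply Metric.isBounded_closedBall (x := (0:ℂ)) (r := 4) |>.subset
        intro z hz
        simpa [Metric.mem_closedBall, dist_zero_right] using hz.1
    obtain ⟨z₀, hz₀K, hmin⟩ := hKc.exists_isMinOn hKne
      (continuous_norm.comp hs₁.continuous).continuousOn
    refine ⟨‖s₁ z₀‖, by simpa using norm_pos_iff.mpr (hnonvanish z₀ hz₀K), ?_⟩
    intro z h4 hk
    exact hmin ⟨h4, hk⟩
  · refine ⟨1, one_pos, ?_⟩
    intro z h4 hk
    exact absurd ⟨z, h4, hk⟩ hKne

set_option maxHeartbeats 2000000 in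
/-- Lower bound for the entire function `s₁` (with `s₁(w²) = sin(πw)/(πw)`) outside the disks
`{|z − k²| < 3d₀}`, `k ∈ ℕ, k ≥ 1`:  `|s₁(z)| ≥ c e^{π√|z| |sin(θ/2)|}/(1+|z|)`. -/
theorem sOne_lower_bound (d₀ : ℝ) (hd₀ : d₀ ∈ Set.Ioo (0 : ℝ) (1/2))
    (hsmall : ∀ ξ : ℂ, Real.pi * ‖ξ‖ ≤ d₀ →
      ‖(if ξ = 0 then 1 else Complex.sin (Real.pi * ξ) / (Real.pi * ξ)) - 1‖ ≤ 1/2)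
    (s₁ : ℂ → ℂ) (hs₁ : Differentiable ℂ s₁)
    (hval : ∀ w : ℂ, w ≠ 0 → s₁ (w ^ 2) = Complex.sin (Real.pi * w) / (Real.pi * w)) :
    ∃ c : ℝ, 0 < c ∧ ∀ z : ℂ,
      (∀ k : ℕ, 1 ≤ k → 3 * d₀ ≤ ‖z - (k : ℂ) ^ 2‖) →
      c * Real.exp (Real.pi * Real.sqrt (‖z‖) * |Real.sin (z.arg / 2)|) /
          (1 + ‖z‖) ≤ ‖s₁ z‖ := by
  have hd₀0 : 0 < d₀ := hd₀.1
  have hd₀half : d₀ < 1/2 := hd₀.2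
  obtain ⟨c₁, hc₁, hrect⟩ := aux_rect d₀ hd₀ hsmall
  obtain ⟨m₁, hm₁, hcomp⟩ := aux_compact_min d₀ hd₀ hsmall s₁ hs₁ hval
  set q : ℝ := 1 - Real.exp (-(2*Real.pi)) with hqdef
  have hqpos : 0 < q := by
    have h1 : Real.exp (-(2*Real.pi)) < Real.exp 0 :=
      Real.exp_lt_exp.mpr (by nlinarith [Real.pi_pos])
    rw [Real.exp_zero] at h1
    rw [hqdef]; linarith
  set c : ℝ := min (m₁ * Real.exp (-(2*Real.pi)))
      (min (q / (2*Real.pi)) (c₁ * d₀ / (Real.pi * Real.exp Real.pi))) with hcdef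
  have hcpos : 0 < c :=
    lt_min (by positivity) (lt_min (by positivity) (by positivity))
  refine ⟨c, hcpos, ?_⟩
  intro z hz
  by_cases h4 : ‖z‖ ≤ 4
  · -- small |z| : use the compact minimum
    have hm := hcomp z h4 hz
    have hE : Real.pi * Real.sqrt (‖z‖) * |Real.sin (z.arg/2)| ≤ 2*Real.pi := by
      have h1 : Real.sqrt (‖z‖) ≤ 2 := by
        rw [show (2:ℝ) = Real.sqrt 4 by
          rw [show (4:ℝ) = 2^2 by norm_num, Real.sqrt_sq (by norm_num : (0:ℝ) ≤ 2)]]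
        exact Real.sqrt_le_sqrt h4
      have h2 : |Real.sin (z.arg/2)| ≤ 1 :=
        abs_le.mpr ⟨Real.neg_one_le_sin _, Real.sin_le_one _⟩
      have h3 := mul_le_mul h1 h2 (abs_nonneg (Real.sin (z.arg/2)))
        (by norm_num : (0:ℝ) ≤ 2)
      nlinarith [Real.pi_pos, Real.sqrt_nonneg (‖z‖),
        abs_nonneg (Real.sin (z.arg/2))]
    calc c * Real.exp (Real.pi * Real.sqrt (‖z‖) * |Real.sin (z.arg/2)|) /
          (1 + ‖z‖)
        ≤ c * Real.exp (Real.pi * Real.sqrt (‖z‖) * |Real.sin (z.arg/2)|) := by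
          apply div_le_self (by positivity)
          linarith [norm_nonneg z]
      _ ≤ (m₁ * Real.exp (-(2*Real.pi))) * Real.exp (2*Real.pi) := by
          apply mul_le_mul (min_le_left _ _) (Real.exp_le_exp.mpr hE)
            (Real.exp_pos _).le (by positivity)
      _ = m₁ := by rw [mul_assoc, ← Real.exp_add]; simp
      _ ≤ ‖s₁ z‖ := hm
  · -- large |z|
    push_neg at h4
    have hz0 : z ≠ 0 := by
      intro h; rw [h] at h4; simp at h4; linarith
    obtain ⟨w, hw0, hw2, habsw, him, hwre⟩ := aux_sqrt z hz0
    set A : ℝ := ‖w‖ with hAdef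
    have hApos : 0 < A := norm_pos_iff.mpr hw0
    have hA2 : 2 ≤ A := by
      rw [habsw, show (2:ℝ) = Real.sqrt 4 by
        rw [show (4:ℝ) = 2^2 by norm_num, Real.sqrt_sq (by norm_num : (0:ℝ) ≤ 2)]]
      exact Real.sqrt_le_sqrt h4.le
    have hAz : ‖z‖ = A ^ 2 := by rw [← hw2, norm_pow, hAdef]
    have hEeq : Real.pi * Real.sqrt (‖z‖) * |Real.sin (z.arg/2)| =
        Real.pi * |w.im| := by
      rw [him, abs_mul, _root_.abs_of_nonneg (Real.sqrt_nonneg (‖z‖))]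
      ring
    set Ee : ℝ := Real.exp (Real.pi * |w.im|) with hEedef
    have hEepos : 0 < Ee := Real.exp_pos _
    have hs : ‖s₁ z‖ =
        ‖Complex.sin (Real.pi * w)‖ / (Real.pi * A) := by
      rw [← hw2, hval w hw0, norm_div, norm_mul, Complex.norm_real, Real.norm_eq_abs,
        _root_.abs_of_nonneg Real.pi_pos.le]
    set S : ℝ := ‖Complex.sin (Real.pi * w)‖ with hSdef
    have hSnonneg : 0 ≤ S := norm_nonneg _
    rw [hEeq, hs, hAz, div_le_div_iff₀ (by positivity) (by positivity)]
    -- goal : c * Ee * (π * A) ≤ S * (1 + A ^ 2)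
    by_cases him1 : 1 ≤ |w.im|
    · -- far from the real axis
      have hlow := aux_abs_sin_lower ((Real.pi : ℂ) * w)
      have himπ : ((Real.pi : ℂ) * w).im = Real.pi * w.im := by
        simp [Complex.mul_im]
      rw [himπ, abs_mul, _root_.abs_of_nonneg Real.pi_pos.le] at hlow
      have hsmallexp : Real.exp (-(Real.pi * |w.im|)) ≤ Ee * Real.exp (-(2*Real.pi)) := by
        rw [hEedef, ← Real.exp_add]
        apply Real.exp_le_exp.mpr
        nlinarith [Real.pi_pos]
      have hS' : q * Ee / 2 ≤ S := by
        rw [hSdef]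
        have := hlow
        rw [hqdef]
        nlinarith [this, hsmallexp]
      have hc2 : c ≤ q / (2*Real.pi) := (min_le_right _ _).trans (min_le_left _ _)
      calc c * Ee * (Real.pi * A) ≤ q / (2*Real.pi) * Ee * (Real.pi * A) := by gcongr
        _ = (q * Ee / 2) * A := by field_simp
        _ ≤ (q * Ee / 2) * (1 + A^2) := by
            gcongr
            nlinarith [sq_nonneg (A - 1)]
        _ ≤ S * (1 + A^2) := by gcongr
    · -- close to the real axis
      push_neg at him1
      have him1' : |w.im| ≤ 1 := him1.le
      have hcos : 0 ≤ Real.cos (z.arg / 2) := by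
        exact Real.cos_nonneg_of_neg_pi_div_two_le_of_le
          (by linarith [Complex.neg_pi_lt_arg z]) (by linarith [Complex.arg_le_pi z])
      have hre0 : 0 ≤ w.re := by
        rw [hwre]; exact mul_nonneg (Real.sqrt_nonneg _) hcos
      have heq : A ^ 2 = w.re * w.re + w.im * w.im := by
        rw [hAdef, Complex.sq_norm, Complex.normSq_apply]
      have him2 : w.im * w.im ≤ 1 := by
        nlinarith [abs_mul_abs_self w.im, abs_nonneg w.im]
      have hre32 : (3:ℝ)/2 ≤ w.re := by nlinarith
      set k : ℤ := round w.re with hkdef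
      have hk12 : |w.re - (k:ℝ)| ≤ 1/2 := abs_sub_round w.re
      have hk1 : (1:ℝ) ≤ (k:ℝ) := by
        have := (abs_le.mp hk12).2; linarith
      have hkpos : (1:ℤ) ≤ k := by exact_mod_cast hk1
      have hwreA : w.re ≤ A := le_trans (le_abs_self _) (Complex.abs_re_le_norm w)
      have hkA : (k:ℝ) ≤ A + 1/2 := by
        have := (abs_le.mp hk12).1; linarith
      have hkc : ((k.toNat : ℕ) : ℂ) = (k : ℂ) := by
        have h0 : (k.toNat : ℤ) = k := Int.toNat_of_nonneg (by omega)
        exact_mod_cast congrArg (fun n : ℤ => (n : ℂ)) h0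
      have hdisk := hz k.toNat (by omega)
      rw [hkc] at hdisk
      have hfact : z - (k:ℂ)^2 = (w - k) * (w + k) := by rw [← hw2]; ring
      have habs_prod : 3 * d₀ ≤ ‖w - k‖ * ‖w + k‖ := by
        rw [← norm_mul, ← hfact]; exact hdisk
      have habs_sum : ‖w + k‖ ≤ 3 * A := by
        calc ‖w + k‖ ≤ ‖w‖ + ‖(k:ℂ)‖ :=
              norm_add_le _ _
          _ = A + |(k:ℝ)| := by rw [hAdef, Complex.norm_intCast]
          _ = A + (k:ℝ) := by rw [_root_.abs_of_nonneg (by linarith : (0:ℝ) ≤ (k:ℝ))]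
          _ ≤ 3 * A := by linarith
      have hu_low : d₀ / A ≤ ‖w - k‖ := by
        rw [div_le_iff₀ hApos]
        nlinarith [norm_nonneg (w - k), habs_prod, habs_sum]
      have hure : |(w - (k:ℂ)).re| ≤ 1/2 := by
        simpa [Complex.sub_re] using hk12
      have huim : |(w - (k:ℂ)).im| ≤ 1 := by
        simpa [Complex.sub_im] using him1'
      have hrectu := hrect (w - (k:ℂ)) hure huim
      have hsin_eq : S = ‖Complex.sin (Real.pi * (w - (k:ℂ)))‖ := by
        rw [hSdef]
        have hsplit : (Real.pi : ℂ) * w = Real.pi * (w - (k:ℂ)) + (k:ℂ) * Real.pi := by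
          push_cast; ring
        rw [hsplit, Complex.sin_antiperiodic.add_int_mul_eq k, norm_mul]
        simp
      have hS2 : c₁ * (d₀ / A) ≤ S := by
        rw [hsin_eq]
        calc c₁ * (d₀ / A) ≤ c₁ * ‖w - (k:ℂ)‖ := by gcongr
          _ ≤ _ := hrectu
      have hEe : Ee ≤ Real.exp Real.pi := by
        rw [hEedef]
        apply Real.exp_le_exp.mpr
        nlinarith [Real.pi_pos, abs_nonneg w.im]
      have hc3 : c ≤ c₁ * d₀ / (Real.pi * Real.exp Real.pi) :=
        (min_le_right _ _).trans (min_le_right _ _)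
      have hstep : c₁ * d₀ ≤ S * A := by
        have h := mul_le_mul_of_nonneg_right hS2 hApos.le
        have h2 : c₁ * (d₀ / A) * A = c₁ * d₀ := by field_simp
        linarith
      calc c * Ee * (Real.pi * A)
          ≤ (c₁ * d₀ / (Real.pi * Real.exp Real.pi)) * Real.exp Real.pi * (Real.pi * A) := by
            gcongr
        _ = c₁ * d₀ * A := by field_simp
        _ ≤ S * A * A := by nlinarith
        _ ≤ S * (1 + A^2) := by nlinarith
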